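/- Let G be a finite simple graph on the vertex set {1,…,n} that is chordal, with maximal cliques C₁,…,C_q, and let f be a real-valued function on real symmetric n×n matrices such that f(X) = f(Y) whenever X_{ij} = Y_{ij} for every i and for every edge (i,j) of G. Then the infimum of f(X) over all positive semidefinite real symmetric n×n matrices X equals the infimum of f(X) over all real symmetric n×n matrices X such that the principal submatrix X_{C_k C_k} is positive semidefinite for every k ∈ {1,…,q}. -/

import Mathlib

set_option linter.unusedSectionVars false
set_option maxHeartbeats 1000000



/-- A finite simple graph is chordal if every cycle of length at least four has a chord,
i.e., an edge of the graph joining two vertices of the cycle that is not an edge of the cycle. -/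
def SimpleGraph.IsChordal {V : Type*} (G : SimpleGraph V) : Prop :=
  ∀ ⦃v : V⦄ (w : G.Walk v v), w.IsCycle → 4 ≤ w.length →
    ∃ x y, x ∈ w.support ∧ y ∈ w.support ∧ G.Adj x y ∧ s(x, y) ∉ w.edges

/-- A maximal clique: a clique not properly contained in another clique. -/
def SimpleGraph.IsMaxClique {V : Type*} (G : SimpleGraph V) (C : Finset V) : Prop :=
  G.IsClique (C : Set V) ∧ ∀ D : Finset V, G.IsClique (D : Set V) → C ⊆ D → C = D

open Matrix RealInnerProductSpace

namespace DSD
variable {V : Type*} [Fintype V] [DecidableEq V]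

lemma mulVec_single_comm {ι : Type*} [Fintype ι] [DecidableEq ι] (M : Matrix ι ι ℝ) (j : ι)
    (x : ℝ) : M *ᵥ Pi.single j x = fun i => M i j * x :=
  funext fun _ => dotProduct_single _ _ _

lemma symm_range {ι : Type*} [Fintype ι] [DecidableEq ι] (A : Matrix ι ι ℝ) (hA : A.IsSymm)
    (b : ι → ℝ) (hb : ∀ z, A *ᵥ z = 0 → b ⬝ᵥ z = 0) : ∃ s, A *ᵥ s = b := by
  have hAH : A.IsHermitian := by
    rwa [Matrix.IsHermitian, Matrix.conjTranspose_eq_transpose_of_trivial]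
  let K : Submodule ℝ (EuclideanSpace ℝ ι) := LinearMap.range (Matrix.toEuclideanLin A)
  obtain ⟨y, hy, z, hz, hbyz⟩ :=
    K.exists_add_mem_mem_orthogonal ((WithLp.equiv 2 (ι → ℝ)).symm b)
  have hsymm := (Matrix.isHermitian_iff_isSymmetric).mp hAH
  have hinner : ∀ x w : EuclideanSpace ℝ ι,
      ⟪x, w⟫ = (WithLp.equiv 2 (ι → ℝ)) x ⬝ᵥ (WithLp.equiv 2 (ι → ℝ)) w := by
    intro x w
    simp [PiLp.inner_apply, dotProduct, mul_comm]
  have hAz : Matrix.toEuclideanLin A z = 0 := by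
    have h1 : ∀ w : EuclideanSpace ℝ ι, ⟪Matrix.toEuclideanLin A z, w⟫ = 0 := by
      intro w
      rw [hsymm z w, real_inner_comm]
      exact hz _ (LinearMap.mem_range_self _ w)
    have := h1 (Matrix.toEuclideanLin A z)
    rwa [inner_self_eq_zero] at this
  have hAz' : A *ᵥ (WithLp.equiv 2 (ι → ℝ)) z = 0 := by
    have := congrArg (WithLp.equiv 2 (ι → ℝ)) hAz
    rw [Matrix.toEuclideanLin_apply] at this
    exact this
  have hbz : b ⬝ᵥ (WithLp.equiv 2 (ι → ℝ)) z = 0 := hb _ hAz'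
  have hz0 : z = 0 := by
    have h2 : ⟪(WithLp.equiv 2 (ι → ℝ)).symm b, z⟫ = ⟪z, z⟫ := by
      rw [hbyz, inner_add_left]
      rw [Submodule.mem_orthogonal] at hz
      rw [hz y hy, zero_add]
    rw [hinner, Equiv.apply_symm_apply, hbz] at h2
    exact inner_self_eq_zero.mp h2.symm
  rw [hz0, add_zero] at hbyz
  obtain ⟨w, hw⟩ := hy
  refine ⟨(WithLp.equiv 2 (ι → ℝ)) w, ?_⟩
  have := congrArg (WithLp.equiv 2 (ι → ℝ)) (hw.trans hbyz.symm)
  rw [Matrix.toEuclideanLin_apply] at this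
  exact this

lemma border_exists {ι : Type*} [Fintype ι] [DecidableEq ι] (A : Matrix ι ι ℝ) (hA : A.IsSymm)
    (b : ι → ℝ) (α : ℝ)
    (h : ∀ (t : ℝ) (w : ι → ℝ), 0 ≤ α * t ^ 2 + 2 * t * (b ⬝ᵥ w) + w ⬝ᵥ A *ᵥ w) :
    ∃ s, A *ᵥ s = b ∧ s ⬝ᵥ A *ᵥ s ≤ α := by
  have hα : 0 ≤ α := by have := h 1 0; simpa using this
  have hker : ∀ z, A *ᵥ z = 0 → b ⬝ᵥ z = 0 := by
    intro z hz
    by_contra hc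
    have hz' : ∀ t : ℝ, 0 ≤ α * t ^ 2 + 2 * t * (b ⬝ᵥ z) := by
      intro t; have := h t z; rwa [hz, dotProduct_zero, add_zero] at this
    set c := b ⬝ᵥ z with hcdef
    have h3 := hz' (-c / (α + 1))
    have hα1 : (0:ℝ) < α + 1 := by linarith
    have hc2 : 0 < c ^ 2 := by positivity
    have e : α * (-c / (α + 1)) ^ 2 + 2 * (-c / (α + 1)) * c
        = (α * c ^ 2 - 2 * c ^ 2 * (α + 1)) / (α + 1) ^ 2 := by
      field_simp; ring
    rw [e] at h3
    have h7 := mul_nonneg h3 (le_of_lt (pow_pos hα1 2))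
    rw [div_mul_cancel₀ _ (ne_of_gt (pow_pos hα1 2))] at h7
    nlinarith [mul_nonneg hα hc2.le]
  obtain ⟨s, hs⟩ := symm_range A hA b hker
  refine ⟨s, hs, ?_⟩
  have e2 : b ⬝ᵥ s = s ⬝ᵥ A *ᵥ s := by rw [← hs, dotProduct_comm]
  have h4' : 0 ≤ α * 1 ^ 2 + 2 * 1 * (b ⬝ᵥ (-s)) + (-s) ⬝ᵥ A *ᵥ (-s) := h 1 (-s)
  rw [dotProduct_neg, Matrix.mulVec_neg, dotProduct_neg, neg_dotProduct, neg_neg, e2] at h4'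
  nlinarith

lemma dot_localize (T : Finset V) (z z' : V → ℝ) (hz : ∀ i ∉ T, z i = 0) :
    z ⬝ᵥ z' = ∑ a : T, z (a : V) * z' (a : V) := by
  rw [Finset.sum_coe_sort T (fun i => z i * z' i)]
  exact (Finset.sum_subset T.subset_univ (fun i _ hi => by rw [hz i hi, zero_mul])).symm

lemma dot_mulVec_localize (X : Matrix V V ℝ) (T : Finset V) (z z' : V → ℝ)
    (hz : ∀ i ∉ T, z i = 0) (hz' : ∀ i ∉ T, z' i = 0) :
    z ⬝ᵥ X *ᵥ z' = (fun a : T => z (a : V)) ⬝ᵥ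
      (X.submatrix ((↑) : T → V) ((↑) : T → V)) *ᵥ (fun a : T => z' (a : V)) := by
  simp only [dotProduct, mulVec, submatrix_apply]
  have hinner : ∀ i, (∑ j, X i j * z' j) = ∑ b : T, X i (b : V) * z' (b : V) := by
    intro i
    rw [Finset.sum_coe_sort T (fun j => X i j * z' j)]
    exact (Finset.sum_subset T.subset_univ (fun j _ hj => by rw [hz' j hj, mul_zero])).symm
  calc ∑ i, z i * ∑ j, X i j * z' j
      = ∑ i ∈ T, z i * ∑ j, X i j * z' j :=
        (Finset.sum_subset T.subset_univ (fun i _ hi => by rw [hz i hi, zero_mul])).symm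
    _ = ∑ a : T, z (a : V) * ∑ j, X (a : V) j * z' j :=
        (Finset.sum_coe_sort T (fun i => z i * ∑ j, X i j * z' j)).symm
    _ = _ := Finset.sum_congr rfl (fun a _ => by rw [hinner (a : V)])

lemma dot_mulVec_symm (X : Matrix V V ℝ) (hX : X.IsSymm) (z z' : V → ℝ) :
    z ⬝ᵥ X *ᵥ z' = z' ⬝ᵥ X *ᵥ z := by
  rw [dotProduct_mulVec, ← Matrix.mulVec_transpose, hX.eq, dotProduct_comm]

lemma quad_add3 (X : Matrix V V ℝ) (hX : X.IsSymm) (a b c : V → ℝ) :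
    (a + b + c) ⬝ᵥ X *ᵥ (a + b + c) =
      a ⬝ᵥ X *ᵥ a + b ⬝ᵥ X *ᵥ b + c ⬝ᵥ X *ᵥ c
        + 2 * (a ⬝ᵥ X *ᵥ b) + 2 * (a ⬝ᵥ X *ᵥ c) + 2 * (b ⬝ᵥ X *ᵥ c) := by
  simp only [Matrix.mulVec_add, add_dotProduct, dotProduct_add]
  rw [dot_mulVec_symm X hX b a, dot_mulVec_symm X hX c a, dot_mulVec_symm X hX c b]
  ring

end DSD


namespace DSD
open Matrix
variable {V : Type*} [Fintype V] [DecidableEq V]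

def psdOn (X : Matrix V V ℝ) (T : Finset V) : Prop :=
  ∀ w : V → ℝ, (∀ i ∉ T, w i = 0) → 0 ≤ w ⬝ᵥ X *ᵥ w

lemma psdOn_mono {X : Matrix V V ℝ} {T T' : Finset V} (h : T ⊆ T') (hp : psdOn X T') :
    psdOn X T :=
  fun w hw => hp w fun i hi => hw i fun hiT => hi (h hiT)

/-- Vectors supported in `T` see only the `T × T` entries. -/
lemma quad_congr (X Y : Matrix V V ℝ) (T : Finset V)
    (hXY : ∀ i ∈ T, ∀ j ∈ T, X i j = Y i j) (z z' : V → ℝ)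
    (hz : ∀ i ∉ T, z i = 0) (hz' : ∀ i ∉ T, z' i = 0) :
    z ⬝ᵥ X *ᵥ z' = z ⬝ᵥ Y *ᵥ z' := by
  rw [dot_mulVec_localize X T z z' hz hz', dot_mulVec_localize Y T z z' hz hz']
  have hsub : X.submatrix ((↑) : T → V) ((↑) : T → V)
      = Y.submatrix ((↑) : T → V) ((↑) : T → V) := by
    ext a b; exact hXY a a.2 b b.2
  rw [hsub]

/-- Extension by zero. -/
def ext0 (T : Finset V) (w : T → ℝ) : V → ℝ := fun i => if h : i ∈ T then w ⟨i, h⟩ else 0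

lemma ext0_supp (T : Finset V) (w : T → ℝ) : ∀ i ∉ T, ext0 T w i = 0 :=
  fun i hi => dif_neg hi

lemma ext0_restrict (T : Finset V) (w : T → ℝ) : (fun a : T => ext0 T w a) = w := by
  funext a; simp [ext0, a.2]

def upd (X : Matrix V V ℝ) (u v : V) (x : ℝ) : Matrix V V ℝ :=
  Matrix.of fun i j => if (i = u ∧ j = v) ∨ (i = v ∧ j = u) then x else X i j

lemma upd_isSymm {X : Matrix V V ℝ} (hX : X.IsSymm) (u v : V) (x : ℝ) :
    (upd X u v x).IsSymm := by
  unfold Matrix.IsSymm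
  ext i j
  simp only [transpose_apply, upd, of_apply]
  by_cases h : (j = u ∧ i = v) ∨ (j = v ∧ i = u)
  · rw [if_pos h, if_pos (by tauto)]
  · rw [if_neg h, if_neg (by tauto), hX.apply]

lemma upd_apply_of_ne {X : Matrix V V ℝ} {u v : V} {x : ℝ} {i j : V}
    (h : ¬((i = u ∧ j = v) ∨ (i = v ∧ j = u))) : upd X u v x i j = X i j := if_neg h

lemma completion_step (X : Matrix V V ℝ) (hX : X.IsSymm) (u v : V) (huv : u ≠ v)
    (S : Finset V) (hu : u ∉ S) (hv : v ∉ S)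
    (h1 : psdOn X (insert u S)) (h2 : psdOn X (insert v S)) :
    ∃ x : ℝ, psdOn (upd X u v x) (insert v (insert u S)) := by
  set A : Matrix S S ℝ := X.submatrix ((↑) : S → V) ((↑) : S → V) with hAdef
  have hA : A.IsSymm := by
    unfold Matrix.IsSymm; ext a b; simp [hAdef, hX.apply]
  -- the bordered-form hypothesis, for `u` and for `v`
  have border : ∀ p : V, p ∉ S → psdOn X (insert p S) →
      ∀ (t : ℝ) (w : S → ℝ),
        0 ≤ X p p * t ^ 2 + 2 * t * ((fun a : S => X a p) ⬝ᵥ w) + w ⬝ᵥ A *ᵥ w := by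
    intro p hp hpsd t w
    have hzsupp : ∀ i ∉ S, ext0 S w i = 0 := ext0_supp S w
    have hWsupp : ∀ i ∉ insert p S, (ext0 S w + (Pi.single p t : V → ℝ)) i = 0 := by
      intro i hi
      simp only [Finset.mem_insert, not_or] at hi
      have h5 : (Pi.single p t : V → ℝ) i = 0 := by
        rw [Pi.single_apply, if_neg hi.1]
      simp [Pi.add_apply, hzsupp i hi.2, h5]
    have h0 := hpsd _ hWsupp
    have hexp : (ext0 S w + (Pi.single p t : V → ℝ)) ⬝ᵥ X *ᵥ
          (ext0 S w + (Pi.single p t : V → ℝ))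
        = ext0 S w ⬝ᵥ X *ᵥ ext0 S w
          + 2 * (ext0 S w ⬝ᵥ X *ᵥ (Pi.single p t : V → ℝ))
          + (Pi.single p t : V → ℝ) ⬝ᵥ X *ᵥ (Pi.single p t : V → ℝ) := by
      simp only [Matrix.mulVec_add, add_dotProduct, dotProduct_add]
      rw [dot_mulVec_symm X hX (Pi.single p t : V → ℝ) (ext0 S w)]
      ring
    have e1 : ext0 S w ⬝ᵥ X *ᵥ ext0 S w = w ⬝ᵥ A *ᵥ w := by
      rw [dot_mulVec_localize X S _ _ hzsupp hzsupp, ext0_restrict]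
    have e2 : ext0 S w ⬝ᵥ X *ᵥ (Pi.single p t : V → ℝ)
        = t * ((fun a : S => X a p) ⬝ᵥ w) := by
      rw [mulVec_single_comm]
      rw [dot_localize S (ext0 S w) (fun i => X i p * t) hzsupp]
      simp only [dotProduct]
      rw [Finset.mul_sum]
      apply Finset.sum_congr rfl
      intro a _
      have h8 : ext0 S w (a : V) = w a := by simp [ext0, a.2]
      rw [h8]; ring
    have e3 : (Pi.single p t : V → ℝ) ⬝ᵥ X *ᵥ (Pi.single p t : V → ℝ)
        = X p p * t ^ 2 := by
      rw [mulVec_single_comm, single_dotProduct]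
      ring
    rw [hexp, e1, e2, e3] at h0
    nlinarith [h0]
  obtain ⟨s, hs, hsb⟩ := border_exists A hA (fun a : S => X a u) (X u u)
    (border u hu h1)
  obtain ⟨s', hs', hsb'⟩ := border_exists A hA (fun a : S => X a v) (X v v)
    (border v hv h2)
  set x : ℝ := s ⬝ᵥ A *ᵥ s' with hxdef
  refine ⟨x, ?_⟩
  intro W hW
  set t : ℝ := W u with htdef
  set r : ℝ := W v with hrdef
  set w₀ : V → ℝ := fun i => if i ∈ S then W i else 0 with hw₀def
  have hw₀supp : ∀ i ∉ S, w₀ i = 0 := fun i hi => by simp [hw₀def, hi]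
  have hX' : (upd X u v x).IsSymm := upd_isSymm hX u v _
  have hdecomp : W = w₀ + (Pi.single u t : V → ℝ) + (Pi.single v r : V → ℝ) := by
    funext i
    by_cases hiS : i ∈ S
    · have hiu : i ≠ u := fun h => hu (h ▸ hiS)
      have hiv : i ≠ v := fun h => hv (h ▸ hiS)
      simp [hw₀def, hiS, Pi.single_apply, hiu, hiv]
    · by_cases hiu : i = u
      · have e1 : w₀ i = 0 := hw₀supp i hiS
        have e2 : (Pi.single u t : V → ℝ) i = t := by
          rw [Pi.single_apply, if_pos hiu]
        have e3 : (Pi.single v r : V → ℝ) i = 0 := by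
          rw [Pi.single_apply, if_neg (fun h => huv (hiu.symm.trans h))]
        rw [Pi.add_apply, Pi.add_apply, e1, e2, e3, zero_add, add_zero, htdef, hiu]
      · by_cases hiv : i = v
        · have e1 : w₀ i = 0 := hw₀supp i hiS
          have e2 : (Pi.single u t : V → ℝ) i = 0 := by
            rw [Pi.single_apply, if_neg hiu]
          have e3 : (Pi.single v r : V → ℝ) i = r := by
            rw [Pi.single_apply, if_pos hiv]
          rw [Pi.add_apply, Pi.add_apply, e1, e2, e3, zero_add, zero_add, hrdef, hiv]
        · have h7 : W i = 0 := hW i (by simp [hiv, hiu, hiS])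
          simp [hw₀def, hiS, Pi.single_eq_of_ne hiu, Pi.single_eq_of_ne hiv, h7]
  have hzssupp : ∀ i ∉ S, ext0 S s i = 0 := ext0_supp S s
  have hzs'supp : ∀ i ∉ S, ext0 S s' i = 0 := ext0_supp S s'
  have hZsupp : ∀ i ∉ S, (w₀ + t • ext0 S s + r • ext0 S s') i = 0 := by
    intro i hi
    simp [Pi.add_apply, Pi.smul_apply, hw₀supp i hi, hzssupp i hi, hzs'supp i hi]
  have hZ : 0 ≤ (w₀ + t • ext0 S s + r • ext0 S s') ⬝ᵥ X *ᵥ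
      (w₀ + t • ext0 S s + r • ext0 S s') :=
    psdOn_mono (Finset.subset_insert u S) h1 _ hZsupp
  have expand1 := quad_add3 (upd X u v x) hX' w₀
    (Pi.single u t : V → ℝ) (Pi.single v r : V → ℝ)
  have expand2 := quad_add3 X hX w₀ (t • ext0 S s) (r • ext0 S s')
  -- identify the pieces of expand1
  have hoffdiag : ∀ i ∈ S, ∀ p : V, p ∉ S → upd X u v x i p = X i p := by
    intro i hi p _
    refine upd_apply_of_ne ?_
    rintro (⟨hiu, -⟩ | ⟨hiv, -⟩)
    · exact hu (hiu ▸ hi)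
    · exact hv (hiv ▸ hi)
  have f1 : w₀ ⬝ᵥ upd X u v x *ᵥ w₀ = w₀ ⬝ᵥ X *ᵥ w₀ := by
    refine quad_congr _ X S ?_ w₀ w₀ hw₀supp hw₀supp
    intro i hi j hj
    refine upd_apply_of_ne ?_
    rintro (⟨hiu, -⟩ | ⟨hiv, -⟩)
    · exact hu (hiu ▸ hi)
    · exact hv (hiv ▸ hi)
  have f2 : (Pi.single u t : V → ℝ) ⬝ᵥ upd X u v x *ᵥ
      (Pi.single u t : V → ℝ) = X u u * t ^ 2 := by
    rw [mulVec_single_comm, single_dotProduct]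
    have h9 : upd X u v x u u = X u u := upd_apply_of_ne (by tauto)
    rw [h9]; ring
  have f3 : (Pi.single v r : V → ℝ) ⬝ᵥ upd X u v x *ᵥ
      (Pi.single v r : V → ℝ) = X v v * r ^ 2 := by
    rw [mulVec_single_comm, single_dotProduct]
    have h9 : upd X u v x v v = X v v := upd_apply_of_ne (by tauto)
    rw [h9]; ring
  have f4 : w₀ ⬝ᵥ upd X u v x *ᵥ (Pi.single u t : V → ℝ)
      = t * ((fun a : S => w₀ a) ⬝ᵥ fun a : S => X a u) := by
    rw [mulVec_single_comm]
    rw [dot_localize S w₀ (fun i => upd X u v x i u * t) hw₀supp]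
    simp only [dotProduct]
    rw [Finset.mul_sum]
    apply Finset.sum_congr rfl
    intro a _
    rw [hoffdiag a a.2 u hu]; ring
  have f5 : w₀ ⬝ᵥ upd X u v x *ᵥ (Pi.single v r : V → ℝ)
      = r * ((fun a : S => w₀ a) ⬝ᵥ fun a : S => X a v) := by
    rw [mulVec_single_comm]
    rw [dot_localize S w₀ (fun i => upd X u v x i v * r) hw₀supp]
    simp only [dotProduct]
    rw [Finset.mul_sum]
    apply Finset.sum_congr rfl
    intro a _
    rw [hoffdiag a a.2 v hv]; ring
  have f6 : (Pi.single u t : V → ℝ) ⬝ᵥ upd X u v x *ᵥ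
      (Pi.single v r : V → ℝ) = t * r * x := by
    rw [mulVec_single_comm, single_dotProduct]
    have h9 : upd X u v x u v = s ⬝ᵥ A *ᵥ s' := by
      simp [upd, hxdef]
    rw [h9]; ring
  -- identify the pieces of expand2
  have g2 : (t • ext0 S s) ⬝ᵥ X *ᵥ (t • ext0 S s) = (s ⬝ᵥ A *ᵥ s) * t ^ 2 := by
    rw [smul_dotProduct, Matrix.mulVec_smul, dotProduct_smul]
    rw [dot_mulVec_localize X S _ _ hzssupp hzssupp, ext0_restrict]
    simp only [smul_eq_mul]; ring
  have g3 : (r • ext0 S s') ⬝ᵥ X *ᵥ (r • ext0 S s') = (s' ⬝ᵥ A *ᵥ s') * r ^ 2 := by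
    rw [smul_dotProduct, Matrix.mulVec_smul, dotProduct_smul]
    rw [dot_mulVec_localize X S _ _ hzs'supp hzs'supp, ext0_restrict]
    simp only [smul_eq_mul]; ring
  have g4 : w₀ ⬝ᵥ X *ᵥ (t • ext0 S s)
      = t * ((fun a : S => w₀ a) ⬝ᵥ fun a : S => X a u) := by
    rw [Matrix.mulVec_smul, dotProduct_smul]
    rw [dot_mulVec_localize X S _ _ hw₀supp hzssupp, ext0_restrict, hs]
    simp only [smul_eq_mul]
  have g5 : w₀ ⬝ᵥ X *ᵥ (r • ext0 S s')
      = r * ((fun a : S => w₀ a) ⬝ᵥ fun a : S => X a v) := by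
    rw [Matrix.mulVec_smul, dotProduct_smul]
    rw [dot_mulVec_localize X S _ _ hw₀supp hzs'supp, ext0_restrict, hs']
    simp only [smul_eq_mul]
  have g6 : (t • ext0 S s) ⬝ᵥ X *ᵥ (r • ext0 S s') = t * r * x := by
    rw [smul_dotProduct, Matrix.mulVec_smul, dotProduct_smul]
    rw [dot_mulVec_localize X S _ _ hzssupp hzs'supp, ext0_restrict, ext0_restrict]
    simp only [smul_eq_mul]; ring
  rw [← hdecomp] at expand1
  rw [f1, f2, f3, f4, f5, f6] at expand1
  rw [g2, g3, g4, g5, g6] at expand2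
  rw [expand1]
  rw [expand2] at hZ
  nlinarith [hZ, hsb, hsb', sq_nonneg t, sq_nonneg r,
    mul_nonneg (sq_nonneg t) (sub_nonneg.mpr hsb), mul_nonneg (sq_nonneg r) (sub_nonneg.mpr hsb')]

end DSD

namespace DSD
open SimpleGraph Walk
variable {V : Type*} [Fintype V] [DecidableEq V]

lemma loop_length_zero {G : SimpleGraph V} {p : V} (w : G.Walk p p)
    (hnd : w.support.Nodup) : w.length = 0 := by
  have := (Walk.isPath_iff_eq_nil).mp ((Walk.isPath_def w).mpr hnd)
  simp [this]

lemma cycle_nbrs {G : SimpleGraph V} {v : V} (c : G.Walk v v) (hc : c.IsCycle)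
    (hlen : 4 ≤ c.length) :
    ∃ p q, p ∈ c.support ∧ q ∈ c.support ∧ G.Adj v p ∧ G.Adj v q ∧ p ≠ q ∧
      s(p, q) ∉ c.edges := by
  cases c with
  | nil => exact absurd rfl hc.ne_nil
  | @cons _ p _ h1 w1 =>
    cases w1 with
    | nil => simp at hlen
    | @cons _ p3 _ h1b w1' =>
      obtain ⟨qv, w2, h2, heq⟩ := Walk.exists_cons_eq_concat h1b w1'
      rw [heq] at hc hlen ⊢
      -- now the walk is cons h1 (w2.concat h2), w2 : G.Walk p qv, h2 : G.Adj qv v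
      have hsupp : (Walk.cons h1 (w2.concat h2)).support = v :: (w2.support ++ [v]) := by
        simp [Walk.support_cons, Walk.concat_eq_append, Walk.support_append]
      have hedges : (Walk.cons h1 (w2.concat h2)).edges
          = s(v, p) :: (w2.edges ++ [s(qv, v)]) := by
        simp [Walk.edges_cons, Walk.concat_eq_append, Walk.edges_append]
      have hnd : (w2.support ++ [v]).Nodup := by
        have := hc.2
        rw [hsupp] at this
        simpa using this
      have hw2nd : w2.support.Nodup := (List.nodup_append.mp hnd).1
      have hvw2 : v ∉ w2.support := by
        have := (List.nodup_append.mp hnd).2.2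
        intro hv
        exact this v hv v (by simp) rfl
      have hlw2 : 2 ≤ w2.length := by
        have : (Walk.cons h1 (w2.concat h2)).length = w2.length + 2 := by
          simp [Walk.length_cons, Walk.length_concat]
        omega
      have hpq : p ≠ qv := by
        intro hpq
        subst hpq
        have := loop_length_zero w2 hw2nd
        omega
      refine ⟨p, qv, ?_, ?_, h1, h2.symm, hpq, ?_⟩
      · rw [hsupp]; simp [Walk.start_mem_support]
      · rw [hsupp]; simp [Walk.end_mem_support]
      · rw [hedges]
        simp only [List.mem_cons, List.mem_append, List.mem_singleton]
        push_neg
        refine ⟨?_, ?_, ?_⟩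
        · intro heq2
          rw [Sym2.eq_iff] at heq2
          rcases heq2 with ⟨hp, -⟩ | ⟨-, hq⟩
          · exact absurd hp h1.ne'
          · exact absurd hq h2.ne
        · -- s(p, qv) ∉ w2.edges
          cases w2 with
          | nil => simp
          | @cons _ p3' _ h3 w3 =>
            simp only [Walk.edges_cons, List.mem_cons, not_or]
            constructor
            · intro heq2
              rw [Sym2.eq_iff] at heq2
              rcases heq2 with ⟨-, hq⟩ | ⟨hp, -⟩
              · -- qv = p3', so w3 : Walk p3' qv is a loop
                have hnd3 : w3.support.Nodup := by
                  have := hw2nd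
                  simp only [Walk.support_cons, List.nodup_cons] at this
                  exact this.2
                have := loop_length_zero (w3.copy hq.symm rfl) (by simpa using hnd3)
                simp only [Walk.length_copy] at this
                simp only [Walk.length_cons] at hlw2
                omega
              · exact absurd hp h3.ne
            · intro hmem
              have := Walk.fst_mem_support_of_mem_edges w3 hmem
              have hnodup := hw2nd
              simp only [Walk.support_cons, List.nodup_cons] at hnodup
              exact hnodup.1 this
        · refine ⟨?_, by simp⟩
          intro heq2
          rw [Sym2.eq_iff] at heq2
          rcases heq2 with ⟨hp, -⟩ | ⟨hp, -⟩
          · exact absurd hp hpq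
          · exact absurd hp h1.ne'

lemma shortcut {G : SimpleGraph V} {s t : V} (p : G.Walk s t) (hp : p.IsPath)
    {x y : V} (hadj : G.Adj x y) (hx : x ∈ p.support) (hy : y ∈ p.support)
    (hne : s(x, y) ∉ p.edges) :
    ∃ q : G.Walk s t, q.length < p.length ∧ ∀ z ∈ q.support, z ∈ p.support := by
  induction p with
  | nil =>
    simp only [Walk.support_nil, List.mem_singleton] at hx hy
    rw [hx, hy] at hadj
    exact absurd hadj (G.irrefl)
  | @cons s c t h p' ih =>
    by_cases hx' : x ∈ p'.support
    · by_cases hy' : y ∈ p'.support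
      · have hne' : s(x, y) ∉ p'.edges := fun hmem => hne (by simp [hmem])
        obtain ⟨q', hlt, hsub⟩ := ih hp.of_cons hx' hy' hne'
        refine ⟨Walk.cons h q', by simp [hlt], ?_⟩
        intro z hz
        rw [Walk.support_cons, List.mem_cons] at hz ⊢
        rcases hz with rfl | hz
        · exact Or.inl rfl
        · exact Or.inr (hsub z hz)
      · -- y = s
        have hys : y = s := by
          rcases (by simpa using hy : y = s ∨ y ∈ p'.support) with h' | h'
          · exact h'
          · exact absurd h' hy'
        have hsx : G.Adj s x := by rw [hys] at hadj; exact hadj.symm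
        have htu : (p'.takeUntil x hx').length ≠ 0 := by
          intro h0
          have hxc : c = x := Walk.eq_of_length_eq_zero h0
          apply hne
          rw [Walk.edges_cons, List.mem_cons]
          left
          rw [Sym2.eq_iff]
          right
          exact ⟨hxc.symm, hys⟩
        have hsplit : (p'.takeUntil x hx').length + (p'.dropUntil x hx').length
            = p'.length := by
          have := congrArg Walk.length (Walk.take_spec p' hx')
          rwa [Walk.length_append] at this
        refine ⟨Walk.cons hsx (p'.dropUntil x hx'), by
          rw [Walk.length_cons, Walk.length_cons]; omega, ?_⟩
        intro z hz
        rw [Walk.support_cons, List.mem_cons] at hz ⊢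
        rcases hz with rfl | hz
        · exact Or.inl rfl
        · exact Or.inr (Walk.support_dropUntil_subset p' hx' hz)
    · have hxs : x = s := by
        rcases (by simpa using hx : x = s ∨ x ∈ p'.support) with h' | h'
        · exact h'
        · exact absurd h' hx'
      have hy' : y ∈ p'.support := by
        rcases (by simpa using hy : y = s ∨ y ∈ p'.support) with h' | h'
        · exact absurd (hxs.trans h'.symm) hadj.ne
        · exact h'
      have hsy : G.Adj s y := by rw [hxs] at hadj; exact hadj
      have htu : (p'.takeUntil y hy').length ≠ 0 := by
        intro h0
        have hyc : c = y := Walk.eq_of_length_eq_zero h0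
        apply hne
        rw [Walk.edges_cons, List.mem_cons]
        left
        rw [Sym2.eq_iff]
        left
        exact ⟨hxs, hyc.symm⟩
      have hsplit : (p'.takeUntil y hy').length + (p'.dropUntil y hy').length
          = p'.length := by
        have := congrArg Walk.length (Walk.take_spec p' hy')
        rwa [Walk.length_append] at this
      refine ⟨Walk.cons hsy (p'.dropUntil y hy'), by
        rw [Walk.length_cons, Walk.length_cons]; omega, ?_⟩
      intro z hz
      rw [Walk.support_cons, List.mem_cons] at hz ⊢
      rcases hz with rfl | hz
      · exact Or.inl rfl
      · exact Or.inr (Walk.support_dropUntil_subset p' hy' hz)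

def IsChordal' {W : Type*} (G : SimpleGraph W) : Prop :=
  ∀ ⦃v : W⦄ (w : G.Walk v v), w.IsCycle → 4 ≤ w.length →
    ∃ x y, x ∈ w.support ∧ y ∈ w.support ∧ G.Adj x y ∧ s(x, y) ∉ w.edges

lemma common_nbrs_clique {G : SimpleGraph V} (hG : IsChordal' G) {u v : V}
    (huv : u ≠ v) (hnadj : ¬ G.Adj u v) {x y : V} (hux : G.Adj u x) (hvx : G.Adj v x)
    (huy : G.Adj u y) (hvy : G.Adj v y) (hxy : x ≠ y) : G.Adj x y := by
  by_contra hc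
  set c : G.Walk u u :=
    Walk.cons hux (Walk.cons hvx.symm (Walk.cons hvy (Walk.cons huy.symm Walk.nil)))
    with hcdef
  have hxu : x ≠ u := hux.ne'
  have hyu : y ≠ u := huy.ne'
  have hxv : x ≠ v := hvx.ne'
  have hyv : y ≠ v := hvy.ne'
  have hcyc : c.IsCycle := by
    rw [Walk.isCycle_def]
    refine ⟨?_, by simp [hcdef], ?_⟩
    · rw [Walk.isTrail_def]
      simp [hcdef, Sym2.eq_iff, hxu, hyu, hxv, hyv, huv, hxy, Ne.symm]
    · simp [hcdef, hxu, hyu, hxv, hyv, huv, hxy, Ne.symm]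
  have hlen : 4 ≤ c.length := by simp [hcdef]
  obtain ⟨a, b, ha, hb, hadj, hnot⟩ := hG c hcyc hlen
  have ha' : a = u ∨ a = x ∨ a = v ∨ a = y := by
    simpa [hcdef, or_comm, or_assoc, or_left_comm] using ha
  have hb' : b = u ∨ b = x ∨ b = v ∨ b = y := by
    simpa [hcdef, or_comm, or_assoc, or_left_comm] using hb
  rcases ha' with rfl | rfl | rfl | rfl <;> rcases hb' with rfl | rfl | rfl | rfl <;>
    first
      | exact G.irrefl hadj
      | exact hnadj hadj
      | exact hnadj hadj.symm
      | exact hc hadj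
      | exact hc hadj.symm
      | (exact hnot (by simp [hcdef, Sym2.eq_iff]))


open scoped Classical

variable {V : Type*} [Fintype V] [DecidableEq V]

def Conn (G : SimpleGraph V) (A : Finset V) (a b : V) : Prop :=
  ∃ p : G.Walk a b, ∀ x ∈ p.support, x ∈ A

def CompleteOn (G : SimpleGraph V) (A : Finset V) : Prop :=
  ∀ x ∈ A, ∀ y ∈ A, x ≠ y → G.Adj x y

def SimpOn (G : SimpleGraph V) (A : Finset V) (v : V) : Prop :=
  v ∈ A ∧ ∀ x ∈ A, ∀ y ∈ A, G.Adj v x → G.Adj v y → x ≠ y → G.Adj x y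

def ChordalOn (G : SimpleGraph V) (A : Finset V) : Prop :=
  ∀ ⦃v : V⦄ (w : G.Walk v v), w.IsCycle → 4 ≤ w.length → (∀ x ∈ w.support, x ∈ A) →
    ∃ x y, x ∈ w.support ∧ y ∈ w.support ∧ G.Adj x y ∧ s(x, y) ∉ w.edges

lemma chordalOn_mono {G : SimpleGraph V} {A B : Finset V} (h : B ⊆ A)
    (hch : ChordalOn G A) : ChordalOn G B :=
  fun _ w hc hl hsupp => hch w hc hl (fun x hx => h (hsupp x hx))

lemma support_concat {G : SimpleGraph V} {a b c : V} (p : G.Walk a b) (h : G.Adj b c) :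
    (p.concat h).support = p.support ++ [c] := by
  rw [Walk.concat_eq_append, Walk.support_append]
  simp

lemma conn_extend {G : SimpleGraph V} {A : Finset V} {a x y : V}
    (hc : Conn G A a x) (h : G.Adj x y) (hy : y ∈ A) : Conn G A a y := by
  obtain ⟨p, hp⟩ := hc
  refine ⟨p.concat h, ?_⟩
  intro z hz
  rw [support_concat, List.mem_append, List.mem_singleton] at hz
  rcases hz with hz | rfl
  · exact hp z hz
  · exact hy

lemma conn_on_walk {G : SimpleGraph V} {A : Finset V} {a x : V}
    (p : G.Walk a x) (hp : ∀ z ∈ p.support, z ∈ A) :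
    ∀ z ∈ p.support, Conn G A a z := by
  intro z hz
  exact ⟨p.takeUntil z hz, fun y hy => hp y (Walk.support_takeUntil_subset _ _ hy)⟩

lemma sep_nbr {G : SimpleGraph V} {B : Finset V} {c d s : V} (p : G.Walk c d)
    (hp : ∀ z ∈ p.support, z ∈ B) (hs : s ∈ p.support) (hcs : c ≠ s) :
    ∃ (x : V) (q : G.Walk c x), G.Adj x s ∧ s ∉ q.support ∧ (∀ z ∈ q.support, z ∈ B) := by
  rcases hq' : p.takeUntil s hs with _ | ⟨hadj1, q1⟩
  · exact absurd rfl hcs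
  · obtain ⟨x₂, q₂, h₂, heq⟩ := SimpleGraph.Walk.exists_cons_eq_concat hadj1 q1
    have hsupp2 : (p.takeUntil s hs).support = q₂.support ++ [s] := by
      rw [hq', heq, support_concat]
    have hsnot : s ∉ q₂.support := by
      intro hmem
      have hcount := SimpleGraph.Walk.count_support_takeUntil_eq_one p hs
      rw [hsupp2, List.count_append] at hcount
      have h1 : 1 ≤ (q₂.support).count s := List.one_le_count_iff.mpr hmem
      simp [List.count_singleton] at hcount
      omega
    refine ⟨x₂, q₂, h₂, hsnot, ?_⟩
    intro z hz
    apply hp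
    apply SimpleGraph.Walk.support_takeUntil_subset p hs
    rw [hsupp2, List.mem_append]
    exact Or.inl hz

theorem dirac : ∀ (N : ℕ) (G : SimpleGraph V) (A : Finset V), A.card ≤ N →
    ChordalOn G A → A.Nonempty →
    (∃ v, SimpOn G A v) ∧
      (¬ CompleteOn G A → ∃ v w, SimpOn G A v ∧ SimpOn G A w ∧ v ≠ w ∧ ¬ G.Adj v w) := by
  intro N
  induction N with
  | zero =>
    intro G A hcard _ hne
    obtain ⟨x, hx⟩ := hne
    rw [Nat.le_zero, Finset.card_eq_zero] at hcard
    subst hcard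
    exact absurd hx (Finset.notMem_empty x)
  | succ N ih =>
    intro G A hcard hch hne
    by_cases hcomp : CompleteOn G A
    · obtain ⟨v, hv⟩ := hne
      exact ⟨⟨v, hv, fun x hx y hy _ _ hxy => hcomp x hx y hy hxy⟩, fun h => absurd hcomp h⟩
    · -- there are two nonadjacent vertices a b in A
      rw [CompleteOn] at hcomp
      push_neg at hcomp
      obtain ⟨a, haA, b, hbA, hab, hnadj⟩ := hcomp
      -- the trivial separator
      have hS0 : ¬ Conn G (A \ ((A.erase a).erase b)) a b := by
        rintro ⟨p, hp⟩
        cases p with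
        | nil => exact hab rfl
        | @cons _ c _ h p₂ =>
          have hc : c ∈ A \ ((A.erase a).erase b) := by
            apply hp
            rw [Walk.support_cons, List.mem_cons]
            right
            exact Walk.start_mem_support p₂
          rw [Finset.mem_sdiff, Finset.mem_erase, Finset.mem_erase] at hc
          push_neg at hc
          by_cases hcb : c = b
          · exact hnadj (hcb ▸ h)
          · exact (hc.2 hcb h.ne') hc.1
      -- a minimum-cardinality separator S
      obtain ⟨S, hSmem, hSmin⟩ := Finset.exists_min_image
        (((A.erase a).erase b).powerset.filter (fun T => ¬ Conn G (A \ T) a b))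
        Finset.card
        ⟨(A.erase a).erase b, by
          rw [Finset.mem_filter, Finset.mem_powerset]
          exact ⟨le_refl _, hS0⟩⟩
      rw [Finset.mem_filter, Finset.mem_powerset] at hSmem
      obtain ⟨hSsub', hSsep⟩ := hSmem
      have hSsub : S ⊆ A := hSsub'.trans ((Finset.erase_subset _ _).trans (Finset.erase_subset _ _))
      have haS : a ∉ S := fun h => by
        have := hSsub' h
        rw [Finset.mem_erase, Finset.mem_erase] at this
        exact this.2.1 rfl
      have hbS : b ∉ S := fun h => by
        have := hSsub' h
        rw [Finset.mem_erase] at this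
        exact this.1 rfl
      set Ca : V → Prop := fun x => Conn G (A \ S) a x with hCadef
      set Cb : V → Prop := fun x => Conn G (A \ S) b x with hCbdef
      have hCaA : ∀ x, Ca x → x ∈ A \ S := by
        rintro x ⟨p, hp⟩
        exact hp x (Walk.end_mem_support p)
      have hCbA : ∀ x, Cb x → x ∈ A \ S := by
        rintro x ⟨p, hp⟩
        exact hp x (Walk.end_mem_support p)
      have haAS : a ∈ A \ S := Finset.mem_sdiff.mpr ⟨haA, haS⟩
      have hbAS : b ∈ A \ S := Finset.mem_sdiff.mpr ⟨hbA, hbS⟩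
      have hCa_a : Ca a := ⟨Walk.nil, by simpa using haAS⟩
      have hCb_b : Cb b := ⟨Walk.nil, by simpa using hbAS⟩
      have hdisj : ∀ x, Ca x → Cb x → False := by
        rintro x ⟨p, hp⟩ ⟨q, hq⟩
        refine hSsep ⟨p.append q.reverse, ?_⟩
        intro z hz
        rw [Walk.mem_support_append_iff] at hz
        rcases hz with hz | hz
        · exact hp z hz
        · rw [Walk.support_reverse, List.mem_reverse] at hz
          exact hq z hz
      have hnadj2 : ∀ x y, Ca x → Cb y → ¬ G.Adj x y := by
        intro x y hx hy hadj
        exact hdisj y (conn_extend hx hadj (hCbA y hy)) hy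
      -- every separator vertex has a neighbor in the `a`-component
      have hnbr_core : ∀ s ∈ S, ∀ c : V, c ∈ A \ S → c ≠ s →
          (∀ q : G.Walk a b, (∀ z ∈ q.support, z ∈ A \ S.erase s) → s ∈ q.support →
            ∃ x, Conn G (A \ S) c x ∧ G.Adj s x) → True := fun _ _ _ _ _ _ => trivial
      have hnbr : ∀ s ∈ S, ∃ x, Ca x ∧ G.Adj s x := by
        intro s hsS
        by_contra hno
        push_neg at hno
        have has : a ≠ s := fun h => haS (h ▸ hsS)
        have herase : ¬ Conn G (A \ S.erase s) a b := by
          rintro ⟨p, hp⟩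
          by_cases hs : s ∈ p.support
          · obtain ⟨x₂, q₂, h₂, hsnot, hq₂B⟩ := sep_nbr p hp hs has
            have hq₂A : ∀ z ∈ q₂.support, z ∈ A \ S := by
              intro z hz
              have hzA := hq₂B z hz
              rw [Finset.mem_sdiff] at hzA ⊢
              refine ⟨hzA.1, fun hzS => ?_⟩
              have hzs : z ≠ s := fun h => hsnot (h ▸ hz)
              exact hzA.2 (Finset.mem_erase.mpr ⟨hzs, hzS⟩)
            exact hno x₂ ⟨q₂, hq₂A⟩ h₂.symm
          · refine hSsep ⟨p, ?_⟩
            intro z hz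
            have hzA := hp z hz
            rw [Finset.mem_sdiff] at hzA ⊢
            refine ⟨hzA.1, fun hzS => ?_⟩
            have hzs : z ≠ s := fun h => hs (h ▸ hz)
            exact hzA.2 (Finset.mem_erase.mpr ⟨hzs, hzS⟩)
        have hlt : (S.erase s).card < S.card := Finset.card_erase_lt_of_mem hsS
        have := hSmin (S.erase s) (by
          rw [Finset.mem_filter, Finset.mem_powerset]
          exact ⟨(Finset.erase_subset _ _).trans hSsub', herase⟩)
        omega
      have hnbrB : ∀ s ∈ S, ∃ x, Cb x ∧ G.Adj s x := by
        intro s hsS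
        by_contra hno
        push_neg at hno
        have hbs : b ≠ s := fun h => hbS (h ▸ hsS)
        have herase : ¬ Conn G (A \ S.erase s) a b := by
          rintro ⟨p, hp⟩
          by_cases hs : s ∈ p.reverse.support
          · obtain ⟨x₂, q₂, h₂, hsnot, hq₂B⟩ := sep_nbr p.reverse
              (by intro z hz; rw [SimpleGraph.Walk.support_reverse, List.mem_reverse] at hz
                  exact hp z hz) hs hbs
            have hq₂A : ∀ z ∈ q₂.support, z ∈ A \ S := by
              intro z hz
              have hzA := hq₂B z hz
              rw [Finset.mem_sdiff] at hzA ⊢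
              refine ⟨hzA.1, fun hzS => ?_⟩
              have hzs : z ≠ s := fun h => hsnot (h ▸ hz)
              exact hzA.2 (Finset.mem_erase.mpr ⟨hzs, hzS⟩)
            exact hno x₂ ⟨q₂, hq₂A⟩ h₂.symm
          · rw [SimpleGraph.Walk.support_reverse, List.mem_reverse] at hs
            refine hSsep ⟨p, ?_⟩
            intro z hz
            have hzA := hp z hz
            rw [Finset.mem_sdiff] at hzA ⊢
            refine ⟨hzA.1, fun hzS => ?_⟩
            have hzs : z ≠ s := fun h => hs (h ▸ hz)
            exact hzA.2 (Finset.mem_erase.mpr ⟨hzs, hzS⟩)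
        have hlt : (S.erase s).card < S.card := Finset.card_erase_lt_of_mem hsS
        have := hSmin (S.erase s) (by
          rw [Finset.mem_filter, Finset.mem_powerset]
          exact ⟨(Finset.erase_subset _ _).trans hSsub', herase⟩)
        omega
      -- S is a clique
      have hSclique : ∀ x ∈ S, ∀ y ∈ S, x ≠ y → G.Adj x y := by
        intro σ hσS τ hτS hστ
        by_contra hst
        -- minimal connecting path through one side
        have key : ∀ (c : V), (∀ s ∈ S, ∃ x, Conn G (A \ S) c x ∧ G.Adj s x) →
            ∃ pa : G.Walk σ τ, pa.IsPath ∧ 2 ≤ pa.length ∧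
              (∀ z ∈ pa.support, z = σ ∨ z = τ ∨ Conn G (A \ S) c z) ∧
              (∀ q : G.Walk σ τ,
                (∀ z ∈ q.support, z = σ ∨ z = τ ∨ Conn G (A \ S) c z) →
                pa.length ≤ q.length) := by
          intro c hnb
          obtain ⟨xσ, hxσ, haσ⟩ := hnb σ hσS
          obtain ⟨xτ, hxτ, haτ⟩ := hnb τ hτS
          obtain ⟨pσ, hpσ⟩ := hxσ
          obtain ⟨pτ, hpτ⟩ := hxτ
          have hwQ : ∀ z ∈ (pσ.reverse.append pτ).support, Conn G (A \ S) c z := by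
            intro z hz
            rw [SimpleGraph.Walk.mem_support_append_iff] at hz
            rcases hz with hz | hz
            · rw [SimpleGraph.Walk.support_reverse, List.mem_reverse] at hz
              exact conn_on_walk pσ hpσ z hz
            · exact conn_on_walk pτ hpτ z hz
          set p₀ : G.Walk σ τ :=
            SimpleGraph.Walk.cons haσ ((pσ.reverse.append pτ).concat haτ.symm) with hp₀def
          have hQ₀ : ∀ z ∈ p₀.support, z = σ ∨ z = τ ∨ Conn G (A \ S) c z := by
            intro z hz
            rw [hp₀def, SimpleGraph.Walk.support_cons, List.mem_cons] at hz
            rcases hz with rfl | hz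
            · exact Or.inl rfl
            · rw [support_concat, List.mem_append, List.mem_singleton] at hz
              rcases hz with hz | rfl
              · exact Or.inr (Or.inr (hwQ z hz))
              · exact Or.inr (Or.inl rfl)
          have hPn : ∃ n, ∃ p : G.Walk σ τ,
              (∀ z ∈ p.support, z = σ ∨ z = τ ∨ Conn G (A \ S) c z) ∧ p.length = n :=
            ⟨p₀.length, p₀, hQ₀, rfl⟩
          obtain ⟨p₁, hQ₁, hl₁⟩ := Nat.find_spec hPn
          refine ⟨p₁.bypass, SimpleGraph.Walk.bypass_isPath p₁, ?_, ?_, ?_⟩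
          case refine_2 =>
            intro z hz
            exact hQ₁ z (SimpleGraph.Walk.support_bypass_subset p₁ hz)
          case refine_3 =>
            intro q hq
            have h1 : Nat.find hPn ≤ q.length := Nat.find_min' hPn ⟨q, hq, rfl⟩
            have h2 : p₁.bypass.length ≤ p₁.length := SimpleGraph.Walk.length_bypass_le p₁
            omega
          case refine_1 =>
            rcases hb' : p₁.bypass with _ | ⟨hadj1, q1⟩
            · exact absurd rfl hστ
            · rw [SimpleGraph.Walk.length_cons]
              rcases hq1 : q1.length with _ | m
              · have hmid := SimpleGraph.Walk.eq_of_length_eq_zero hq1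
                exact absurd (hmid ▸ hadj1) hst
              · omega
        obtain ⟨pa, hpaP, hpal, hpaQ, hpamin⟩ := key a hnbr
        obtain ⟨pb, hpbP, hpbl, hpbQ, hpbmin⟩ := key b hnbrB
        -- the cycle
        set cyc : G.Walk σ σ := pa.append pb.reverse with hcycdef
        have hcyclen : cyc.length = pa.length + pb.length := by
          rw [hcycdef, SimpleGraph.Walk.length_append, SimpleGraph.Walk.length_reverse]
        have hbothmem : ∀ z, z ∈ pa.support → z ∈ pb.support → z = σ ∨ z = τ := by
          intro z hza hzb
          rcases hpaQ z hza with rfl | rfl | hca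
          · exact Or.inl rfl
          · exact Or.inr rfl
          · rcases hpbQ z hzb with rfl | rfl | hcb
            · exact Or.inl rfl
            · exact Or.inr rfl
            · exact absurd hcb (fun h => hdisj z hca h)
        have hedge_disj : ∀ e, e ∈ pa.edges → e ∈ pb.edges → False := by
          intro e
          induction e using Sym2.inductionOn with
          | hf z₁ z₂ =>
            intro hea heb
            have hz₁a := SimpleGraph.Walk.fst_mem_support_of_mem_edges pa hea
            have hz₂a := SimpleGraph.Walk.snd_mem_support_of_mem_edges pa hea
            have hz₁b := SimpleGraph.Walk.fst_mem_support_of_mem_edges pb heb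
            have hz₂b := SimpleGraph.Walk.snd_mem_support_of_mem_edges pb heb
            have hadj := SimpleGraph.Walk.adj_of_mem_edges pa hea
            rcases hbothmem z₁ hz₁a hz₁b with rfl | rfl <;>
              rcases hbothmem z₂ hz₂a hz₂b with rfl | rfl
            · exact hadj.ne rfl
            · exact hst hadj
            · exact hst hadj.symm
            · exact hadj.ne rfl
        have hσpb : σ ∈ pb.support := SimpleGraph.Walk.start_mem_support pb
        have hτpb : τ ∈ pb.support := SimpleGraph.Walk.end_mem_support pb
        have hσpa : σ ∈ pa.support := SimpleGraph.Walk.start_mem_support pa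
        have hτpa : τ ∈ pa.support := SimpleGraph.Walk.end_mem_support pa
        have hcyccyc : cyc.IsCycle := by
          rw [SimpleGraph.Walk.isCycle_def]
          refine ⟨?_, ?_, ?_⟩
          · rw [SimpleGraph.Walk.isTrail_def, hcycdef, SimpleGraph.Walk.edges_append]
            refine List.Nodup.append hpaP.isTrail.edges_nodup
              hpbP.reverse.isTrail.edges_nodup ?_
            intro e hea heb
            rw [SimpleGraph.Walk.edges_reverse, List.mem_reverse] at heb
            exact hedge_disj e hea heb
          · intro hnil
            have := congrArg SimpleGraph.Walk.length hnil
            rw [SimpleGraph.Walk.length_nil, hcyclen] at this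
            omega
          · rw [hcycdef, SimpleGraph.Walk.tail_support_append]
            have hnda : pa.support.tail.Nodup := by
              have := hpaP.support_nodup
              rw [SimpleGraph.Walk.support_eq_cons] at this
              exact (List.nodup_cons.mp this).2
            have hndb : pb.reverse.support.tail.Nodup := by
              have := hpbP.reverse.support_nodup
              rw [SimpleGraph.Walk.support_eq_cons] at this
              exact (List.nodup_cons.mp this).2
            refine List.Nodup.append hnda hndb ?_
            intro z hza hzb
            have hzσ : z ≠ σ := by
              have := hpaP.support_nodup
              rw [SimpleGraph.Walk.support_eq_cons, List.nodup_cons] at this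
              intro h
              exact this.1 (h ▸ hza)
            have hzτ : z ≠ τ := by
              have := hpbP.reverse.support_nodup
              rw [SimpleGraph.Walk.support_eq_cons, List.nodup_cons] at this
              intro h
              exact this.1 (h ▸ hzb)
            have hza' : z ∈ pa.support := by
              rw [SimpleGraph.Walk.support_eq_cons, List.mem_cons]
              exact Or.inr hza
            have hzb' : z ∈ pb.support := by
              have : z ∈ pb.reverse.support := by
                rw [SimpleGraph.Walk.support_eq_cons, List.mem_cons]
                exact Or.inr hzb
              rwa [SimpleGraph.Walk.support_reverse, List.mem_reverse] at this
            rcases hbothmem z hza' hzb' with rfl | rfl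
            · exact hzσ rfl
            · exact hzτ rfl
        have hcycsupp : ∀ x ∈ cyc.support, x ∈ A := by
          intro z hz
          rw [hcycdef, SimpleGraph.Walk.mem_support_append_iff] at hz
          have hz' : z ∈ pa.support ∨ z ∈ pb.support := by
            rcases hz with hz | hz
            · exact Or.inl hz
            · rw [SimpleGraph.Walk.support_reverse, List.mem_reverse] at hz
              exact Or.inr hz
          rcases hz' with hz' | hz'
          · rcases hpaQ z hz' with rfl | rfl | hca
            · exact hSsub hσS
            · exact hSsub hτS
            · exact (Finset.mem_sdiff.mp (hCaA z hca)).1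
          · rcases hpbQ z hz' with rfl | rfl | hcb
            · exact hSsub hσS
            · exact hSsub hτS
            · exact (Finset.mem_sdiff.mp (hCbA z hcb)).1
        obtain ⟨x, y, hxs, hys, hadj, hne⟩ := hch cyc hcyccyc (by omega) hcycsupp
        have hmem : ∀ z, z ∈ cyc.support → z ∈ pa.support ∨ z ∈ pb.support := by
          intro z hz
          rw [hcycdef, SimpleGraph.Walk.mem_support_append_iff] at hz
          rcases hz with hz | hz
          · exact Or.inl hz
          · rw [SimpleGraph.Walk.support_reverse, List.mem_reverse] at hz
            exact Or.inr hz
        have hnea : s(x, y) ∉ pa.edges := by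
          intro h
          exact hne (by rw [hcycdef, SimpleGraph.Walk.edges_append, List.mem_append]
                        exact Or.inl h)
        have hneb : s(x, y) ∉ pb.edges := by
          intro h
          refine hne (by rw [hcycdef, SimpleGraph.Walk.edges_append, List.mem_append]
                         right
                         rw [SimpleGraph.Walk.edges_reverse, List.mem_reverse]
                         exact h)
        by_cases hxpa : x ∈ pa.support <;> by_cases hypa : y ∈ pa.support
        · obtain ⟨q, hql, hqs⟩ := shortcut pa hpaP hadj hxpa hypa hnea
          have := hpamin q (fun z hz => hpaQ z (hqs z hz))
          omega
        · have hypb : y ∈ pb.support := by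
            rcases hmem y hys with h | h
            · exact absurd h hypa
            · exact h
          by_cases hxpb : x ∈ pb.support
          · obtain ⟨q, hql, hqs⟩ := shortcut pb hpbP hadj hxpb hypb hneb
            have := hpbmin q (fun z hz => hpbQ z (hqs z hz))
            omega
          · -- x strictly in a-side, y strictly in b-side
            have hcax : Conn G (A \ S) a x := by
              rcases hpaQ x hxpa with rfl | rfl | h
              · exact absurd hσpb hxpb
              · exact absurd hτpb hxpb
              · exact h
            have hcby : Conn G (A \ S) b y := by
              rcases hpbQ y hypb with rfl | rfl | h
              · exact absurd hσpa hypa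
              · exact absurd hτpa hypa
              · exact h
            exact hnadj2 x y hcax hcby hadj
        · have hxpb : x ∈ pb.support := by
            rcases hmem x hxs with h | h
            · exact absurd h hxpa
            · exact h
          by_cases hypb : y ∈ pb.support
          · obtain ⟨q, hql, hqs⟩ := shortcut pb hpbP hadj hxpb hypb hneb
            have := hpbmin q (fun z hz => hpbQ z (hqs z hz))
            omega
          · have hcay : Conn G (A \ S) a y := by
              rcases hpaQ y hypa with rfl | rfl | h
              · exact absurd hσpb hypb
              · exact absurd hτpb hypb
              · exact h
            have hcbx : Conn G (A \ S) b x := by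
              rcases hpbQ x hxpb with rfl | rfl | h
              · exact absurd hσpa hxpa
              · exact absurd hτpa hxpa
              · exact h
            exact hnadj2 y x hcay hcbx hadj.symm
        · -- x, y both outside pa, hence both in pb
          have hxpb : x ∈ pb.support := by
            rcases hmem x hxs with h | h
            · exact absurd h hxpa
            · exact h
          have hypb : y ∈ pb.support := by
            rcases hmem y hys with h | h
            · exact absurd h hypa
            · exact h
          obtain ⟨q, hql, hqs⟩ := shortcut pb hpbP hadj hxpb hypb hneb
          have := hpbmin q (fun z hz => hpbQ z (hqs z hz))
          omega
      -- recurse into each side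
      have hside : ∀ (c : V) (Cc : V → Prop), Cc = (fun x => Conn G (A \ S) c x) →
          c ∈ A → Cc c → ∀ d : V, d ∈ A → ¬ Cc d → d ∉ S →
          ∃ v, SimpOn G A v ∧ Cc v := by
        intro c Cc hCceq hcA hCc_c d hdA hdnB hdS
        classical
        set B : Finset V := S ∪ A.filter Cc with hBdef
        have hBA : B ⊆ A := by
          intro z hz
          rw [hBdef, Finset.mem_union] at hz
          rcases hz with hz | hz
          · exact hSsub hz
          · exact (Finset.mem_filter.mp hz).1
        have hcB : c ∈ B := by
          rw [hBdef, Finset.mem_union]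
          exact Or.inr (Finset.mem_filter.mpr ⟨hcA, hCc_c⟩)
        have hclose : ∀ v, Cc v → ∀ z ∈ A, G.Adj v z → z ∈ B := by
          intro v hv z hzA hadj
          by_cases hzS : z ∈ S
          · rw [hBdef, Finset.mem_union]; exact Or.inl hzS
          · rw [hBdef, Finset.mem_union]
            refine Or.inr (Finset.mem_filter.mpr ⟨hzA, ?_⟩)
            rw [hCceq]
            rw [hCceq] at hv
            exact conn_extend hv hadj (Finset.mem_sdiff.mpr ⟨hzA, hzS⟩)
        have hdB : d ∉ B := by
          rw [hBdef, Finset.mem_union]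
          push_neg
          exact ⟨hdS, fun h => hdnB (Finset.mem_filter.mp h).2⟩
        have hcardB : B.card ≤ N := by
          have h1 : B.card < A.card :=
            Finset.card_lt_card ((Finset.ssubset_iff_of_subset hBA).mpr ⟨d, hdA, hdB⟩)
          omega
        obtain ⟨hsimpB, hrest⟩ := ih G B hcardB (chordalOn_mono hBA hch) ⟨c, hcB⟩
        have hgetv : ∃ v, SimpOn G B v ∧ Cc v := by
          by_cases hcompB : CompleteOn G B
          · exact ⟨c, ⟨hcB, fun x hx y hy _ _ hxy => hcompB x hx y hy hxy⟩, hCc_c⟩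
          · obtain ⟨v, w, hv, hw, hvw, hnvw⟩ := hrest hcompB
            have hOr : v ∉ S ∨ w ∉ S := by
              by_contra hb2
              push_neg at hb2
              exact hnvw (hSclique v hb2.1 w hb2.2 hvw)
            rcases hOr with h | h
            · refine ⟨v, hv, ?_⟩
              have hv1 := hv.1
              rw [hBdef, Finset.mem_union] at hv1
              rcases hv1 with h' | h'
              · exact absurd h' h
              · exact (Finset.mem_filter.mp h').2
            · refine ⟨w, hw, ?_⟩
              have hw1 := hw.1
              rw [hBdef, Finset.mem_union] at hw1
              rcases hw1 with h' | h'
              · exact absurd h' h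
              · exact (Finset.mem_filter.mp h').2
        obtain ⟨v, hvB, hvCc⟩ := hgetv
        refine ⟨v, ⟨hBA hvB.1, ?_⟩, hvCc⟩
        intro x hxA y hyA hvx hvy hxy
        exact hvB.2 x (hclose v hvCc x hxA hvx) y (hclose v hvCc y hyA hvy) hvx hvy hxy
      obtain ⟨va, hvaSimp, hvaCa⟩ := hside a Ca hCadef haA hCa_a b hbA
        (fun h => hSsep h) hbS
      obtain ⟨vb, hvbSimp, hvbCb⟩ := hside b Cb hCbdef hbA hCb_b a haA
        (fun h => hSsep (by
          obtain ⟨p, hp⟩ := h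
          refine ⟨p.reverse, ?_⟩
          intro z hz
          rw [SimpleGraph.Walk.support_reverse, List.mem_reverse] at hz
          exact hp z hz)) haS
      refine ⟨⟨va, hvaSimp⟩, fun _ => ⟨va, vb, hvaSimp, hvbSimp, ?_, ?_⟩⟩
      · intro h
        exact hdisj vb (h ▸ hvaCa) hvbCb
      · exact hnadj2 va vb hvaCa hvbCb

def addE (G : SimpleGraph V) (u v : V) : SimpleGraph V :=
  G ⊔ SimpleGraph.fromEdgeSet {s(u, v)}

lemma addE_adj {G : SimpleGraph V} {u v x y : V} :
    (addE G u v).Adj x y ↔ G.Adj x y ∨ (s(x, y) = s(u, v) ∧ x ≠ y) := by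
  simp [addE, SimpleGraph.fromEdgeSet_adj]

lemma le_addE {G : SimpleGraph V} {u v : V} : G ≤ addE G u v := le_sup_left

lemma length_rotate {G : SimpleGraph V} {v u : V} (c : G.Walk v v) (h : u ∈ c.support) :
    (c.rotate u h).length = c.length := by
  rw [SimpleGraph.Walk.rotate, SimpleGraph.Walk.length_append]
  have := congrArg SimpleGraph.Walk.length (SimpleGraph.Walk.take_spec c h)
  rw [SimpleGraph.Walk.length_append] at this
  omega

lemma mem_support_rotate {G : SimpleGraph V} {v u z : V} (c : G.Walk v v) (h : u ∈ c.support)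
    (hz : z ∈ (c.rotate u h).support) : z ∈ c.support := by
  rw [SimpleGraph.Walk.support_eq_cons, List.mem_cons] at hz
  rcases hz with rfl | hz
  · exact h
  · have h2 := (SimpleGraph.Walk.support_rotate c u h).mem_iff.mp hz
    rw [SimpleGraph.Walk.support_eq_cons, List.mem_cons]
    exact Or.inr h2

theorem addable : ∀ (N : ℕ) (G : SimpleGraph V) (A : Finset V), A.card ≤ N →
    ChordalOn G A → ¬ CompleteOn G A →
    ∃ u v, u ∈ A ∧ v ∈ A ∧ u ≠ v ∧ ¬ G.Adj u v ∧ ChordalOn (addE G u v) A := by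
  intro N
  induction N with
  | zero =>
    intro G A hcard hch hnc
    rw [Nat.le_zero, Finset.card_eq_zero] at hcard
    subst hcard
    exact absurd (fun x hx => absurd hx (Finset.notMem_empty x)) hnc
  | succ N ih =>
    intro G A hcard hch hnc
    have hnc' := hnc
    rw [CompleteOn] at hnc'
    push_neg at hnc'
    obtain ⟨a, haA, b, hbA, hab, hnadj⟩ := hnc'
    obtain ⟨⟨v, hvsimp⟩, -⟩ := dirac (N + 1) G A hcard hch ⟨a, haA⟩
    have hvA : v ∈ A := hvsimp.1
    by_cases hcz : CompleteOn G (A.erase v)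
    · -- the complete case: add an edge at v
      have hvab : a = v ∨ b = v := by
        by_contra hcon
        push_neg at hcon
        exact hnadj (hcz a (Finset.mem_erase.mpr ⟨hcon.1, haA⟩)
          b (Finset.mem_erase.mpr ⟨hcon.2, hbA⟩) hab)
      obtain ⟨u, huA, huv, hnadjvu⟩ : ∃ u, u ∈ A ∧ u ≠ v ∧ ¬ G.Adj v u := by
        rcases hvab with rfl | rfl
        · exact ⟨b, hbA, fun h => hab h.symm, hnadj⟩
        · exact ⟨a, haA, hab, fun h => hnadj h.symm⟩
      refine ⟨v, u, hvA, huA, fun h => huv h.symm, fun h => hnadjvu h, ?_⟩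
      intro w₀ c hc hlen hsupp
      by_cases hvmem : v ∈ c.support
      · obtain ⟨p, q, hp, hq, hvp, hvq, hpq, hnot⟩ :=
          cycle_nbrs (c.rotate v hvmem) (hc.rotate hvmem) (by
            rwa [length_rotate])
        have hp' : p ∈ c.support := mem_support_rotate c hvmem hp
        have hq' : q ∈ c.support := mem_support_rotate c hvmem hq
        have hGpq : G.Adj p q :=
          hcz p (Finset.mem_erase.mpr ⟨hvp.ne', hsupp p hp'⟩)
            q (Finset.mem_erase.mpr ⟨hvq.ne', hsupp q hq'⟩) hpq
        refine ⟨p, q, hp', hq', le_addE hGpq, ?_⟩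
        intro hmem
        exact hnot (((SimpleGraph.Walk.rotate_edges c v hvmem).mem_iff).mpr hmem)
      · obtain ⟨p, q, hp, hq, hvp, hvq, hpq, hnot⟩ := cycle_nbrs c hc hlen
        have hGpq : G.Adj p q :=
          hcz p (Finset.mem_erase.mpr ⟨fun h => hvmem (h ▸ hp), hsupp p hp⟩)
            q (Finset.mem_erase.mpr ⟨fun h => hvmem (h ▸ hq), hsupp q hq⟩) hpq
        exact ⟨p, q, hp, hq, le_addE hGpq, hnot⟩
    · -- recurse
      have hcarderase : (A.erase v).card ≤ N := by
        have := Finset.card_erase_of_mem hvA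
        omega
      obtain ⟨x, y, hxE, hyE, hxy, hnxy, hch'⟩ :=
        ih G (A.erase v) hcarderase (chordalOn_mono (Finset.erase_subset v A) hch) hcz
      have hxv : x ≠ v := (Finset.mem_erase.mp hxE).1
      have hyv : y ≠ v := (Finset.mem_erase.mp hyE).1
      refine ⟨x, y, (Finset.mem_erase.mp hxE).2, (Finset.mem_erase.mp hyE).2, hxy, hnxy, ?_⟩
      intro w₀ c hc hlen hsupp
      by_cases hvmem : v ∈ c.support
      · obtain ⟨p, q, hp, hq, hvp, hvq, hpq, hnot⟩ :=
          cycle_nbrs (c.rotate v hvmem) (hc.rotate hvmem) (by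
            rwa [length_rotate])
        have hp' : p ∈ c.support := mem_support_rotate c hvmem hp
        have hq' : q ∈ c.support := mem_support_rotate c hvmem hq
        have hGvp : G.Adj v p := by
          rcases addE_adj.mp hvp with h | ⟨h, -⟩
          · exact h
          · rw [Sym2.eq_iff] at h
            rcases h with ⟨h1, -⟩ | ⟨h1, -⟩
            · exact absurd h1.symm hxv
            · exact absurd h1.symm hyv
        have hGvq : G.Adj v q := by
          rcases addE_adj.mp hvq with h | ⟨h, -⟩
          · exact h
          · rw [Sym2.eq_iff] at h
            rcases h with ⟨h1, -⟩ | ⟨h1, -⟩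
            · exact absurd h1.symm hxv
            · exact absurd h1.symm hyv
        have hGpq : G.Adj p q :=
          hvsimp.2 p (hsupp p hp') q (hsupp q hq') hGvp hGvq hpq
        refine ⟨p, q, hp', hq', le_addE hGpq, ?_⟩
        intro hmem
        exact hnot (((SimpleGraph.Walk.rotate_edges c v hvmem).mem_iff).mpr hmem)
      · exact hch' c hc hlen (fun z hz =>
          Finset.mem_erase.mpr ⟨fun h => hvmem (h ▸ hz), hsupp z hz⟩)


open Matrix in
lemma isHermitian_of_isSymm {ι : Type*} [Fintype ι] (X : Matrix ι ι ℝ) (hX : X.IsSymm) :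
    X.IsHermitian := by
  rwa [Matrix.IsHermitian, Matrix.conjTranspose_eq_transpose_of_trivial]

open Matrix in
lemma psdOn_iff_posSemidef (X : Matrix V V ℝ) (hX : X.IsSymm) (T : Finset V) :
    psdOn X T ↔ (X.submatrix ((↑) : T → V) ((↑) : T → V)).PosSemidef := by
  constructor
  · intro hp
    rw [Matrix.posSemidef_iff_dotProduct_mulVec]
    constructor
    · apply isHermitian_of_isSymm
      rw [Matrix.IsSymm]
      ext a b
      simp [Matrix.transpose_apply, Matrix.submatrix_apply, hX.apply]
    · intro xv
      have hsupp := ext0_supp T xv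
      have h0 := hp (ext0 T xv) hsupp
      rw [dot_mulVec_localize X T _ _ hsupp hsupp, ext0_restrict] at h0
      simpa using h0
  · intro hp w hw
    rw [dot_mulVec_localize X T _ _ hw hw]
    have h0 := (Matrix.posSemidef_iff_dotProduct_mulVec.mp hp).2 (fun a : T => w a)
    simpa using h0

open Matrix in
lemma posSemidef_of_psdOn_univ (X : Matrix V V ℝ) (hX : X.IsSymm)
    (h : psdOn X Finset.univ) : X.PosSemidef := by
  rw [Matrix.posSemidef_iff_dotProduct_mulVec]
  constructor
  · exact isHermitian_of_isSymm X hX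
  · intro xv
    have h0 := h xv (fun i hi => absurd (Finset.mem_univ i) hi)
    simpa using h0

open Matrix in
theorem completion : ∀ (k : ℕ) (G : SimpleGraph V),
    (Finset.univ.filter (fun p : V × V => p.1 ≠ p.2 ∧ ¬ G.Adj p.1 p.2)).card ≤ k →
    IsChordal' G →
    ∀ X : Matrix V V ℝ, X.IsSymm →
    (∀ D : Finset V, (∀ x ∈ D, ∀ y ∈ D, x ≠ y → G.Adj x y) → psdOn X D) →
    ∃ Y : Matrix V V ℝ, Y.PosSemidef ∧ (∀ i, Y i i = X i i) ∧
      (∀ i j, G.Adj i j → Y i j = X i j) := by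
  intro k
  induction k with
  | zero =>
    intro G hcard hch X hX hcliq
    by_cases hcomp : ∀ x y : V, x ≠ y → G.Adj x y
    · refine ⟨X, posSemidef_of_psdOn_univ X hX
        (hcliq Finset.univ (fun x _ y _ h => hcomp x y h)), fun _ => rfl, fun _ _ _ => rfl⟩
    · push_neg at hcomp
      obtain ⟨u, v, huv, hnadj⟩ := hcomp
      exfalso
      have : (u, v) ∈ Finset.univ.filter (fun p : V × V => p.1 ≠ p.2 ∧ ¬ G.Adj p.1 p.2) := by
        simp [huv, hnadj]
      have h1 := Finset.card_pos.mpr ⟨(u, v), this⟩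
      omega
  | succ k ih =>
    intro G hcard hch X hX hcliq
    by_cases hcomp : ∀ x y : V, x ≠ y → G.Adj x y
    · refine ⟨X, posSemidef_of_psdOn_univ X hX
        (hcliq Finset.univ (fun x _ y _ h => hcomp x y h)), fun _ => rfl, fun _ _ _ => rfl⟩
    · have hnc : ¬ CompleteOn G Finset.univ := by
        intro h
        exact hcomp fun x y hxy => h x (Finset.mem_univ x) y (Finset.mem_univ y) hxy
      have hchOn : ChordalOn G Finset.univ := fun _ w hc hl _ => hch w hc hl
      obtain ⟨u, v, -, -, huv, hnadj, hch'⟩ :=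
        addable Finset.univ.card G Finset.univ (le_refl _) hchOn hnc
      have hch'' : IsChordal' (addE G u v) := fun _ w hc hl =>
        hch' w hc hl (fun x _ => Finset.mem_univ x)
      set S : Finset V := Finset.univ.filter (fun w => G.Adj u w ∧ G.Adj v w) with hSdef
      have hmemS : ∀ z, z ∈ S ↔ (G.Adj u z ∧ G.Adj v z) := by
        intro z; simp [hSdef]
      have huS : u ∉ S := fun h => G.irrefl ((hmemS u).mp h).1
      have hvS : v ∉ S := fun h => G.irrefl ((hmemS v).mp h).2
      have hSclique : ∀ x ∈ S, ∀ y ∈ S, x ≠ y → G.Adj x y := by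
        intro x hx y hy hxy
        have hx' := (hmemS x).mp hx
        have hy' := (hmemS y).mp hy
        exact common_nbrs_clique hch huv hnadj hx'.1 hx'.2 hy'.1 hy'.2 hxy
      have h1 : psdOn X (insert u S) := by
        apply hcliq
        intro x hx y hy hxy
        rw [Finset.mem_insert] at hx hy
        rcases hx with rfl | hx <;> rcases hy with rfl | hy
        · exact absurd rfl hxy
        · exact ((hmemS y).mp hy).1.symm.symm
        · exact ((hmemS x).mp hx).1.symm
        · exact hSclique x hx y hy hxy
      have h2 : psdOn X (insert v S) := by
        apply hcliq
        intro x hx y hy hxy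
        rw [Finset.mem_insert] at hx hy
        rcases hx with rfl | hx <;> rcases hy with rfl | hy
        · exact absurd rfl hxy
        · exact ((hmemS y).mp hy).2.symm.symm
        · exact ((hmemS x).mp hx).2.symm
        · exact hSclique x hx y hy hxy
      obtain ⟨x₀, hstep⟩ := completion_step X hX u v huv S huS hvS h1 h2
      set X' : Matrix V V ℝ := upd X u v x₀ with hX'def
      have hX's : X'.IsSymm := upd_isSymm hX u v x₀
      have hfix : ∀ i j, ¬((i = u ∧ j = v) ∨ (i = v ∧ j = u)) → X' i j = X i j :=
        fun i j h => upd_apply_of_ne h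
      have hcliq' : ∀ D : Finset V, (∀ x ∈ D, ∀ y ∈ D, x ≠ y → (addE G u v).Adj x y) →
          psdOn X' D := by
        intro D hD
        by_cases hmemD : u ∈ D ∧ v ∈ D
        · have hDsub : D ⊆ insert v (insert u S) := by
            intro z hz
            rw [Finset.mem_insert, Finset.mem_insert]
            by_cases hzv : z = v
            · exact Or.inl hzv
            by_cases hzu : z = u
            · exact Or.inr (Or.inl hzu)
            refine Or.inr (Or.inr ((hmemS z).mpr ⟨?_, ?_⟩))
            · have := hD z hz u hmemD.1 hzu
              rcases addE_adj.mp this with h | ⟨h, -⟩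
              · exact h.symm
              · rw [Sym2.eq_iff] at h
                rcases h with ⟨hzu', -⟩ | ⟨hzv', -⟩
                · exact absurd hzu' hzu
                · exact absurd hzv' hzv
            · have := hD z hz v hmemD.2 hzv
              rcases addE_adj.mp this with h | ⟨h, -⟩
              · exact h.symm
              · rw [Sym2.eq_iff] at h
                rcases h with ⟨hzu', -⟩ | ⟨hzv', -⟩
                · exact absurd hzu' hzu
                · exact absurd hzv' hzv
          exact psdOn_mono hDsub hstep
        · have hDG : ∀ x ∈ D, ∀ y ∈ D, x ≠ y → G.Adj x y := by
            intro x hx y hy hxy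
            rcases addE_adj.mp (hD x hx y hy hxy) with h | ⟨h, -⟩
            · exact h
            · exfalso
              rw [Sym2.eq_iff] at h
              rcases h with ⟨rfl, rfl⟩ | ⟨rfl, rfl⟩
              · exact hmemD ⟨hx, hy⟩
              · exact hmemD ⟨hy, hx⟩
          have hpsd := hcliq D hDG
          intro w hw
          rw [quad_congr X' X D (fun i hi j hj => hfix i j (by
            rintro (⟨rfl, rfl⟩ | ⟨rfl, rfl⟩)
            · exact hmemD ⟨hi, hj⟩
            · exact hmemD ⟨hj, hi⟩)) w w hw hw]
          exact hpsd w hw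
      have hmeas : (Finset.univ.filter
          (fun p : V × V => p.1 ≠ p.2 ∧ ¬ (addE G u v).Adj p.1 p.2)).card ≤ k := by
        have hsub : Finset.univ.filter
            (fun p : V × V => p.1 ≠ p.2 ∧ ¬ (addE G u v).Adj p.1 p.2) ⊆
            Finset.univ.filter (fun p : V × V => p.1 ≠ p.2 ∧ ¬ G.Adj p.1 p.2) := by
          intro p hp
          rw [Finset.mem_filter] at hp ⊢
          exact ⟨hp.1, hp.2.1, fun h => hp.2.2 (le_addE h)⟩
        have hmem : (u, v) ∈ Finset.univ.filter
            (fun p : V × V => p.1 ≠ p.2 ∧ ¬ G.Adj p.1 p.2) := by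
          simp [huv, hnadj]
        have hnmem : (u, v) ∉ Finset.univ.filter
            (fun p : V × V => p.1 ≠ p.2 ∧ ¬ (addE G u v).Adj p.1 p.2) := by
          rw [Finset.mem_filter]
          push_neg
          intro _ _
          exact addE_adj.mpr (Or.inr ⟨rfl, huv⟩)
        have hlt := Finset.card_lt_card
          ((Finset.ssubset_iff_of_subset hsub).mpr ⟨(u, v), hmem, hnmem⟩)
        omega
      obtain ⟨Y, hYpsd, hYdiag, hYadj⟩ := ih (addE G u v) hmeas hch'' X' hX's hcliq'
      refine ⟨Y, hYpsd, ?_, ?_⟩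
      · intro i
        rw [hYdiag i]
        exact hfix i i (by rintro (⟨rfl, rfl⟩ | ⟨rfl, rfl⟩) <;> exact huv rfl)
      · intro i j hadj
        rw [hYadj i j (le_addE hadj)]
        refine hfix i j ?_
        rintro (⟨rfl, rfl⟩ | ⟨rfl, rfl⟩)
        · exact hnadj hadj
        · exact hnadj hadj.symm

lemma exists_maxclique {V : Type*} [Fintype V] [DecidableEq V] (G : SimpleGraph V)
    (D : Finset V) (hD : G.IsClique (D : Set V)) :
    ∃ M : Finset V, G.IsMaxClique M ∧ D ⊆ M := by
  classical
  obtain ⟨M, hMmem, hMmax⟩ := Finset.exists_max_image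
    (Finset.univ.powerset.filter (fun E : Finset V => G.IsClique (↑E : Set V) ∧ D ⊆ E)) Finset.card
    ⟨D, by simp [hD]⟩
  rw [Finset.mem_filter] at hMmem
  refine ⟨M, ⟨hMmem.2.1, ?_⟩, hMmem.2.2⟩
  intro E hE hME
  apply Finset.eq_of_subset_of_card_le hME
  exact hMmax E (by
    rw [Finset.mem_filter]
    exact ⟨Finset.mem_powerset.mpr (Finset.subset_univ E), hE, hMmem.2.2.trans hME⟩)

end DSD

/-- Domain-space decomposition: for a function `f` of symmetric matrices that only depends on
the diagonal entries and the entries indexed by edges of a chordal graph `G`, minimizing `f`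
over positive semidefinite matrices gives the same optimal value as minimizing `f` over
symmetric matrices all of whose principal submatrices indexed by the maximal cliques of `G`
are positive semidefinite. -/
theorem domain_space_decomposition (n q : ℕ) (G : SimpleGraph (Fin n)) (hG : G.IsChordal)
    (C : Fin q → Finset (Fin n))
    (hC : ∀ k, G.IsMaxClique (C k))
    (hCall : ∀ D : Finset (Fin n), G.IsMaxClique D → ∃ k, C k = D)
    (f : Matrix (Fin n) (Fin n) ℝ → ℝ)
    (hf : ∀ X Y : Matrix (Fin n) (Fin n) ℝ, X.IsSymm → Y.IsSymm →
      (∀ i, X i i = Y i i) → (∀ i j, G.Adj i j → X i j = Y i j) → f X = f Y) :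
    sInf (f '' {X : Matrix (Fin n) (Fin n) ℝ | X.PosSemidef}) =
      sInf (f '' {X : Matrix (Fin n) (Fin n) ℝ | X.IsSymm ∧
        ∀ k, (X.submatrix ((↑) : (C k) → Fin n) ((↑) : (C k) → Fin n)).PosSemidef}) := by
  classical
  have himg : f '' {X : Matrix (Fin n) (Fin n) ℝ | X.PosSemidef} =
      f '' {X : Matrix (Fin n) (Fin n) ℝ | X.IsSymm ∧
        ∀ k, (X.submatrix ((↑) : (C k) → Fin n) ((↑) : (C k) → Fin n)).PosSemidef} := by
    apply Set.Subset.antisymm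
    · rintro y ⟨X, hX, rfl⟩
      refine ⟨X, ⟨?_, fun k => hX.submatrix _⟩, rfl⟩
      have h1 := hX.isHermitian
      rwa [Matrix.IsHermitian, Matrix.conjTranspose_eq_transpose_of_trivial] at h1
    · rintro y ⟨X, ⟨hXs, hXk⟩, rfl⟩
      have hcliq : ∀ D : Finset (Fin n), (∀ x ∈ D, ∀ y ∈ D, x ≠ y → G.Adj x y) →
          DSD.psdOn X D := by
        intro D hD
        have hDcl : G.IsClique ((D : Set (Fin n))) := by
          intro x hx y hy hxy
          exact hD x hx y hy hxy
        obtain ⟨M, hM, hDM⟩ := DSD.exists_maxclique G D hDcl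
        obtain ⟨k, hk⟩ := hCall M hM
        have hpsd : DSD.psdOn X M := by
          rw [← hk]
          exact (DSD.psdOn_iff_posSemidef X hXs (C k)).mpr (hXk k)
        exact DSD.psdOn_mono hDM hpsd
      obtain ⟨Y, hYpsd, hYdiag, hYadj⟩ :=
        DSD.completion _ G (le_refl _) hG X hXs hcliq
      refine ⟨Y, hYpsd, ?_⟩
      have hYs : Y.IsSymm := by
        have h1 := hYpsd.isHermitian
        rwa [Matrix.IsHermitian, Matrix.conjTranspose_eq_transpose_of_trivial] at h1
      exact (hf X Y hXs hYs (fun i => (hYdiag i).symm)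
        (fun i j h => (hYadj i j h).symm)).symm
  rw [himg]
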